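/- arXiv:1602.08593 — 2 statements merged into one kernel-verified Lean document; each statement's English description precedes it below -/
import Mathlib

section
/- Let P ⊆ ℝ^d be a full-dimensional polytope and let x ∈ ℝ^d be a point of P. Let K = ⋃_{s>0} s·(P − x) be the cone subtended by P at x. Then the ratio vol(B(x,r) ∩ P)/vol(B(x,r)) converges as r → 0+ to the Gaussian measure ∫_K e^{−π‖v‖²} dv of the cone K. In particular the solid angle ω_P(x) exists and equals ∫_K e^{−π‖v‖²} dv. -/
open MeasureTheory Metric Filter Pointwise

noncomputable section

namespace SolidAngleAux

variable {d : ℕ}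

local notation "E" => EuclideanSpace ℝ (Fin d)

lemma mem_cone_iff {Q : Set E} {v : E} :
    v ∈ (⋃ s ∈ Set.Ioi (0:ℝ), s • Q) ↔ ∃ s : ℝ, 0 < s ∧ v ∈ s • Q := by
  simp [Set.mem_iUnion]

lemma cone_smul {Q : Set E} {r : ℝ} (hr : 0 < r) :
    r • (⋃ s ∈ Set.Ioi (0:ℝ), s • Q) = ⋃ s ∈ Set.Ioi (0:ℝ), s • Q := by
  ext v
  constructor
  · intro h
    obtain ⟨u, hu, rfl⟩ := Set.mem_smul_set.1 h
    rw [mem_cone_iff] at hu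
    obtain ⟨s, hs, hu⟩ := hu
    obtain ⟨q, hq, rfl⟩ := Set.mem_smul_set.1 hu
    refine mem_cone_iff.2 ⟨r * s, by positivity, Set.mem_smul_set.2 ⟨q, hq, ?_⟩⟩
    rw [smul_smul]
  · intro hv
    rw [mem_cone_iff] at hv
    obtain ⟨s, hs, hv⟩ := hv
    obtain ⟨q, hq, rfl⟩ := Set.mem_smul_set.1 hv
    refine Set.mem_smul_set.2 ⟨(r⁻¹ * s) • q,
      mem_cone_iff.2 ⟨r⁻¹ * s, by positivity, Set.mem_smul_set.2 ⟨q, hq, rfl⟩⟩, ?_⟩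
    rw [smul_smul, ← mul_assoc, mul_inv_cancel₀ hr.ne', one_mul]

lemma smul_subset_smul {Q : Set E} (hQ : Convex ℝ Q) (h0 : (0:E) ∈ Q)
    {s t : ℝ} (hs : 0 ≤ s) (hst : s ≤ t) (ht : 0 < t) : s • Q ⊆ t • Q := by
  intro v hv
  obtain ⟨q, hq, rfl⟩ := Set.mem_smul_set.1 hv
  refine Set.mem_smul_set.2 ⟨(s / t) • q, hQ.smul_mem_of_zero_mem h0 hq
    ⟨by positivity, div_le_one_of_le₀ hst ht.le⟩, ?_⟩
  rw [smul_smul, mul_div_cancel₀ _ ht.ne']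

lemma cone_eq_iUnion_nat {Q : Set E} (hQ : Convex ℝ Q) (h0 : (0:E) ∈ Q) :
    (⋃ s ∈ Set.Ioi (0:ℝ), s • Q) = ⋃ n : ℕ, ((n : ℝ) + 1) • Q := by
  apply Set.Subset.antisymm
  · intro v hv
    rw [mem_cone_iff] at hv
    obtain ⟨s, hs, hv⟩ := hv
    obtain ⟨n, hn⟩ := exists_nat_ge s
    exact Set.mem_iUnion.2 ⟨n, smul_subset_smul hQ h0 hs.le
      (hn.trans (by linarith)) (by positivity) hv⟩
  · intro v hv
    obtain ⟨n, hn⟩ := Set.mem_iUnion.1 hv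
    exact mem_cone_iff.2 ⟨(n : ℝ) + 1, by positivity, hn⟩

lemma measurableSet_cone {Q : Set E} (hQ : Convex ℝ Q) (h0 : (0:E) ∈ Q)
    (hc : IsCompact Q) : MeasurableSet (⋃ s ∈ Set.Ioi (0:ℝ), s • Q) := by
  rw [cone_eq_iUnion_nat hQ h0]
  exact MeasurableSet.iUnion fun n => ((hc.smul ((n : ℝ) + 1)).measurableSet)

/-- If a sequence in the convex hull of a finite set tends to `0`, then eventually twice the
sequence still lies in the convex hull. -/
lemma two_smul_mem (S' : Finset E) (w : ℕ → E)
    (hw : ∀ n, w n ∈ convexHull ℝ (S' : Set E))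
    (hlim : Tendsto w atTop (nhds 0)) :
    ∃ n, (2:ℝ) • w n ∈ convexHull ℝ (S' : Set E) := by
  have h : ∀ n, ∃ c : E → ℝ, (∀ y ∈ S', 0 ≤ c y) ∧ (∑ y ∈ S', c y = 1) ∧
      S'.centerMass c id = w n := by
    intro n
    have := hw n
    rw [Finset.convexHull_eq] at this
    exact this
  choose c hc0 hc1 hcm using h
  -- coefficients as elements of the standard simplex on the subtype `↥S'`
  set γ : ℕ → (↥S' → ℝ) := fun n i => c n ↑i with hγdef
  have hγ : ∀ n, γ n ∈ stdSimplex ℝ (↥S') := by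
    intro n
    refine ⟨fun i => hc0 n _ i.2, ?_⟩
    rw [Finset.sum_coe_sort S' (c n)]
    exact hc1 n
  have hF : Continuous fun f : ↥S' → ℝ => ∑ i : ↥S', f i • (i : E) :=
    continuous_finset_sum _ fun i _ => (continuous_apply i).smul continuous_const
  have hFγ : ∀ n, (∑ i : ↥S', γ n i • (i : E)) = w n := by
    intro n
    rw [Finset.sum_coe_sort S' (fun y => c n y • y)]
    rw [← hcm n, Finset.centerMass_eq_of_sum_1 _ id (hc1 n)]
    rfl
  obtain ⟨lam, hlam, φ, hφ, hconv⟩ :=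
    (isCompact_stdSimplex ℝ (↥S')).tendsto_subseq hγ
  have hlimF : Tendsto (fun n => ∑ i : ↥S', γ (φ n) i • (i : E)) atTop
      (nhds (∑ i : ↥S', lam i • (i : E))) :=
    (hF.continuousAt (x := lam)).tendsto.comp hconv
  have hlim0 : Tendsto (fun n => ∑ i : ↥S', γ (φ n) i • (i : E)) atTop (nhds 0) := by
    simp only [hFγ]
    exact hlim.comp hφ.tendsto_atTop
  have hsum0 : (∑ i : ↥S', lam i • (i : E)) = 0 := tendsto_nhds_unique hlimF hlim0
  -- eventually each coefficient dominates half of the limit coefficient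
  have hev : ∀ᶠ n in atTop, ∀ i : ↥S', lam i / 2 ≤ γ (φ n) i := by
    rw [eventually_all]
    intro i
    rcases eq_or_lt_of_le (hlam.1 i) with h | h
    · exact Eventually.of_forall fun n => by
        rw [← h]; simpa using (hγ (φ n)).1 i
    · have hti : Tendsto (fun n => γ (φ n) i) atTop (nhds (lam i)) :=
        ((continuous_apply i).continuousAt (x := lam)).tendsto.comp hconv
      exact (hti.eventually_const_lt (half_lt_self h)).mono fun n hn => hn.le
  obtain ⟨n, hn⟩ := hev.exists
  refine ⟨φ n, ?_⟩
  -- weights for `2 • w (φ n)`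
  set u : ↥S' → ℝ := fun i => 2 * γ (φ n) i - lam i with hu
  have hu0 : ∀ i : ↥S', 0 ≤ u i := fun i => by
    have := hn i; simp only [hu]; linarith
  have husum : ∑ i : ↥S', u i = 1 := by
    simp only [hu, Finset.sum_sub_distrib, ← Finset.mul_sum, (hγ (φ n)).2, hlam.2]
    norm_num
  have hmem : (Finset.univ : Finset ↥S').centerMass u (fun i => (i : E)) ∈
      convexHull ℝ (S' : Set E) :=
    Finset.centerMass_mem_convexHull _ (fun i _ => hu0 i) (by rw [husum]; norm_num)
      (fun i _ => i.2)
  have hcm2 : (Finset.univ : Finset ↥S').centerMass u (fun i => (i : E)) = (2:ℝ) • w (φ n) := by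
    rw [Finset.centerMass_eq_of_sum_1 _ _ husum]
    have : ∀ i : ↥S', u i • (i : E) = (2:ℝ) • (γ (φ n) i • (i : E)) - lam i • (i : E) := by
      intro i
      rw [hu, sub_smul, mul_smul]
    rw [Finset.sum_congr rfl fun i _ => this i, Finset.sum_sub_distrib,
      ← Finset.smul_sum, hFγ, hsum0, sub_zero]
  rwa [hcm2] at hmem

/-- A polytope is locally conical at any of its points (here normalized so the point is `0`). -/
lemma exists_eps (S' : Finset E) (Q : Set E) (hQ : Q = convexHull ℝ (S' : Set E))
    (h0 : (0:E) ∈ Q) :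
    ∃ ε : ℝ, 0 < ε ∧ ∀ v ∈ (⋃ s ∈ Set.Ioi (0:ℝ), s • Q), ‖v‖ < ε → v ∈ Q := by
  have hQconv : Convex ℝ Q := hQ ▸ convex_convexHull ℝ _
  have hQcomp : IsCompact Q := hQ ▸ (S'.finite_toSet).isCompact_convexHull ℝ
  have hQclosed : IsClosed Q := hQcomp.isClosed
  obtain ⟨C, hC⟩ := hQcomp.isBounded.exists_norm_le
  by_contra hcon
  push_neg at hcon
  have hseq : ∀ n : ℕ, ∃ v, v ∈ (⋃ s ∈ Set.Ioi (0:ℝ), s • Q) ∧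
      ‖v‖ < 1 / ((n : ℝ) + 1) ∧ v ∉ Q := by
    intro n
    obtain ⟨v, hv1, hv2, hv3⟩ := hcon (1 / ((n : ℝ) + 1)) (by positivity)
    exact ⟨v, hv1, hv2, hv3⟩
  choose v hvK hvlt hvQ using hseq
  have hkey : ∀ n, ∃ w, w ∈ Q ∧ ‖w‖ ≤ ‖v n‖ ∧ (2:ℝ) • w ∉ Q := by
    intro n
    obtain ⟨s, hs, hmem⟩ := mem_cone_iff.1 (hvK n)
    obtain ⟨q, hq, hrep⟩ := Set.mem_smul_set.1 hmem
    have hqne : q ≠ 0 := by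
      rintro rfl
      refine hvQ n ?_
      rw [← hrep, smul_zero]
      exact h0
    set M : Set ℝ := {t : ℝ | 0 ≤ t ∧ t • q ∈ Q} with hM
    have hMne : (1:ℝ) ∈ M := ⟨zero_le_one, by simpa using hq⟩
    have hMsub : M ⊆ Set.Icc 0 (C / ‖q‖) := by
      rintro t ⟨ht0, htq⟩
      refine ⟨ht0, ?_⟩
      have hle := hC _ htq
      rw [norm_smul, Real.norm_of_nonneg ht0] at hle
      have hq' : (0:ℝ) < ‖q‖ := norm_pos_iff.mpr hqne
      exact (le_div_iff₀ hq').2 hle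
    have hMclosed : IsClosed M := by
      have : M = Set.Ici (0:ℝ) ∩ (fun t : ℝ => t • q) ⁻¹' Q := by
        ext t; simp [hM, Set.mem_preimage]
      rw [this]
      exact isClosed_Ici.inter (hQclosed.preimage (continuous_id.smul continuous_const))
    have hMbdd : BddAbove M := ⟨C / ‖q‖, fun t ht => (hMsub ht).2⟩
    set m := sSup M with hm
    have hmM : m ∈ M := hMclosed.csSup_mem ⟨1, hMne⟩ hMbdd
    have hm1 : (1:ℝ) ≤ m := le_csSup hMbdd hMne
    have hdown : ∀ t : ℝ, 0 ≤ t → t ≤ m → t • q ∈ Q := by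
      intro t ht0 htm
      have : t • q = (t / m) • (m • q) := by
        rw [smul_smul, div_mul_cancel₀ _ (by linarith : m ≠ 0)]
      rw [this]
      exact hQconv.smul_mem_of_zero_mem h0 hmM.2
        ⟨by positivity, div_le_one_of_le₀ htm (by linarith)⟩
    have hsm : m < s := by
      by_contra hsm
      push_neg at hsm
      exact hvQ n (by rw [← hrep]; exact hdown s hs.le hsm)
    refine ⟨m • q, hmM.2, ?_, ?_⟩
    · rw [← hrep, norm_smul, norm_smul, Real.norm_of_nonneg (by linarith : (0:ℝ) ≤ m),
        Real.norm_of_nonneg hs.le]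
      exact mul_le_mul_of_nonneg_right hsm.le (norm_nonneg q)
    · intro h2
      rw [smul_smul] at h2
      have : 2 * m ∈ M := ⟨by linarith, h2⟩
      have := le_csSup hMbdd this
      linarith
  choose w hwQ hwle hw2 using hkey
  have hwlim : Tendsto w atTop (nhds 0) := by
    rw [tendsto_zero_iff_norm_tendsto_zero]
    exact squeeze_zero (fun n => norm_nonneg _)
      (fun n => (hwle n).trans (hvlt n).le) tendsto_one_div_add_atTop_nhds_zero_nat
  obtain ⟨n, hn⟩ := two_smul_mem S' w (fun n => hQ ▸ hwQ n) hwlim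
  exact hw2 n (hQ ▸ hn)

/-- The radius of the superlevel set of the Gaussian at level `t`. -/
def gr (t : ℝ) : ℝ := Real.sqrt (Real.log t⁻¹ / Real.pi)

lemma superlevel_eq (t : ℝ) (ht : 0 < t) :
    {v : E | t < Real.exp (-Real.pi * ‖v‖ ^ 2)} = ball (0:E) (gr t) := by
  ext v
  simp only [Set.mem_setOf_eq, mem_ball, dist_zero_right, gr]
  rw [Real.lt_sqrt (norm_nonneg v), ← Real.log_lt_iff_lt_exp ht, lt_div_iff₀ Real.pi_pos,
    Real.log_inv]
  constructor
  · intro h; nlinarith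
  · intro h; nlinarith

lemma gr_eq_zero {t : ℝ} (ht : 1 ≤ t) : gr t = 0 := by
  rw [gr, Real.sqrt_eq_zero']
  have h1 : Real.log t⁻¹ ≤ 0 :=
    Real.log_nonpos (by positivity) (inv_le_one_of_one_le₀ ht)
  exact div_nonpos_of_nonpos_of_nonneg h1 Real.pi_pos.le

lemma gr_pos {t : ℝ} (ht : t ∈ Set.Ioo (0:ℝ) 1) : 0 < gr t := by
  rw [gr]
  apply Real.sqrt_pos.2
  apply div_pos _ Real.pi_pos
  exact Real.log_pos ((one_lt_inv₀ ht.1).2 ht.2)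

lemma ball_inter_cone_smul {K : Set E} (hcone : ∀ r : ℝ, 0 < r → r • K = K)
    {R : ℝ} (hR : 0 < R) :
    ball (0:E) R ∩ K = R • (ball (0:E) 1 ∩ K) := by
  rw [Set.smul_set_inter₀ hR.ne', smul_unitBall_of_pos hR, hcone R hR]

lemma volume_ball_inter_cone {K : Set E} (hcone : ∀ r : ℝ, 0 < r → r • K = K)
    {R : ℝ} (hR : 0 < R) :
    volume (ball (0:E) R ∩ K) = ENNReal.ofReal (R ^ d) * volume (ball (0:E) 1 ∩ K) := by
  rw [ball_inter_cone_smul hcone hR, Measure.addHaar_smul_of_nonneg volume hR.le,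
    finrank_euclideanSpace_fin]

/-- Layer-cake factorization of the Gaussian lintegral over a cone. -/
lemma lintegral_gauss_cone (K : Set E) (hKm : MeasurableSet K)
    (hcone : ∀ r : ℝ, 0 < r → r • K = K) :
    ∫⁻ v in K, ENNReal.ofReal (Real.exp (-Real.pi * ‖v‖ ^ 2)) =
      volume (ball (0:E) 1 ∩ K) *
        ∫⁻ t in Set.Ioo (0:ℝ) 1, ENNReal.ofReal (gr t ^ d) := by
  have hcontf : Continuous fun v : E => Real.exp (-Real.pi * ‖v‖ ^ 2) :=
    Real.continuous_exp.comp ((continuous_const.mul ((continuous_norm).pow 2)))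
  have hnn : 0 ≤ᵐ[volume.restrict K] fun v : E => Real.exp (-Real.pi * ‖v‖ ^ 2) :=
    ae_of_all _ fun v => (Real.exp_pos _).le
  rw [lintegral_eq_lintegral_meas_lt _ hnn hcontf.aemeasurable]
  have hball : ∀ t ∈ Set.Ioi (0:ℝ),
      (volume.restrict K) {v : E | t < Real.exp (-Real.pi * ‖v‖ ^ 2)} =
        volume (ball (0:E) (gr t) ∩ K) := by
    intro t ht
    rw [superlevel_eq t ht, Measure.restrict_apply measurableSet_ball]
  rw [setLIntegral_congr_fun_ae measurableSet_Ioi (ae_of_all _ hball)]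
  rw [← Set.Ioo_union_Ici_eq_Ioi (zero_lt_one : (0:ℝ) < 1),
    lintegral_union measurableSet_Ici ((Set.Iio_disjoint_Ici le_rfl).mono_left Set.Ioo_subset_Iio_self)]
  have hzero : ∀ t ∈ Set.Ici (1:ℝ),
      volume (ball (0:E) (gr t) ∩ K) = 0 := by
    intro t ht
    rw [gr_eq_zero ht, ball_zero, Set.empty_inter, measure_empty]
  rw [setLIntegral_congr_fun_ae measurableSet_Ici (ae_of_all _ hzero)]
  simp only [lintegral_zero, add_zero]
  have hmain : ∀ t ∈ Set.Ioo (0:ℝ) 1,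
      volume (ball (0:E) (gr t) ∩ K) =
        volume (ball (0:E) 1 ∩ K) * ENNReal.ofReal (gr t ^ d) := by
    intro t ht
    rw [volume_ball_inter_cone hcone (gr_pos ht), mul_comm]
  rw [setLIntegral_congr_fun_ae measurableSet_Ioo (ae_of_all _ hmain)]
  exact lintegral_const_mul' _ _
    ((lt_of_le_of_lt (measure_mono Set.inter_subset_left) measure_ball_lt_top).ne)

lemma volume_ball_one_pos : 0 < volume (ball (0:E) 1) :=
  measure_ball_pos volume (0:E) one_pos

lemma volume_ball_one_lt_top : volume (ball (0:E) 1) < ⊤ := measure_ball_lt_top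

/-- The Gaussian integral over a measurable cone equals the relative solid-angle fraction. -/
lemma setIntegral_gauss_cone (K : Set E) (hKm : MeasurableSet K)
    (hcone : ∀ r : ℝ, 0 < r → r • K = K) :
    ∫ v in K, Real.exp (-Real.pi * ‖v‖ ^ 2) =
      (volume (ball (0:E) 1 ∩ K)).toReal / (volume (ball (0:E) 1)).toReal := by
  have hcontf : Continuous fun v : E => Real.exp (-Real.pi * ‖v‖ ^ 2) :=
    Real.continuous_exp.comp ((continuous_const.mul ((continuous_norm).pow 2)))
  -- the total Gaussian integral is 1
  have htotal : (∫ v : E, Real.exp (-Real.pi * ‖v‖ ^ 2)) = 1 := by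
    rw [GaussianFourier.integral_rexp_neg_mul_sq_norm Real.pi_pos]
    rw [div_self Real.pi_ne_zero, Real.one_rpow]
  have huniv_cone : ∀ r : ℝ, 0 < r → r • (Set.univ : Set E) = Set.univ :=
    fun r hr => Set.smul_set_univ₀ hr.ne'
  have huniv := lintegral_gauss_cone Set.univ MeasurableSet.univ huniv_cone
  rw [Measure.restrict_univ, Set.inter_univ] at huniv
  have heq1 : (∫ v : E, Real.exp (-Real.pi * ‖v‖ ^ 2)) =
      (∫⁻ v : E, ENNReal.ofReal (Real.exp (-Real.pi * ‖v‖ ^ 2))).toReal :=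
    integral_eq_lintegral_of_nonneg_ae (ae_of_all _ fun v => (Real.exp_pos _).le)
      hcontf.aestronglyMeasurable
  have hone : (∫⁻ v : E, ENNReal.ofReal (Real.exp (-Real.pi * ‖v‖ ^ 2))) = 1 := by
    rw [← ENNReal.toReal_eq_one_iff, ← heq1, htotal]
  rw [hone] at huniv
  -- solve for the auxiliary integral J
  set J := ∫⁻ t in Set.Ioo (0:ℝ) 1, ENNReal.ofReal (gr t ^ d) with hJ
  have hB0 : volume (ball (0:E) 1) ≠ 0 := volume_ball_one_pos.ne'
  have hBtop : volume (ball (0:E) 1) ≠ ⊤ := volume_ball_one_lt_top.ne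
  have hJval : J = (volume (ball (0:E) 1))⁻¹ := by
    calc J = (volume (ball (0:E) 1))⁻¹ * (volume (ball (0:E) 1) * J) := by
            rw [← mul_assoc, ENNReal.inv_mul_cancel hB0 hBtop, one_mul]
      _ = (volume (ball (0:E) 1))⁻¹ := by rw [← huniv, mul_one]
  have hK := lintegral_gauss_cone K hKm hcone
  rw [← hJ, hJval] at hK
  rw [integral_eq_lintegral_of_nonneg_ae (ae_of_all _ fun v => (Real.exp_pos _).le)
    hcontf.aestronglyMeasurable, hK, ENNReal.toReal_mul, ENNReal.toReal_inv,
    div_eq_mul_inv]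

end SolidAngleAux

open SolidAngleAux

/-- For a full-dimensional polytope `P ⊆ ℝ^d` and a point `x ∈ P`,
the ratio `vol(B(x,r) ∩ P)/vol(B(x,r))` converges as `r → 0+` to the Gaussian
measure `∫_K e^{−π‖v‖²} dv` of the cone `K = ⋃_{s>0} s • (P − x)` subtended by `P` at `x`. -/
theorem solid_angle_eq_gaussian_measure_of_cone
    (d : ℕ) (P : Set (EuclideanSpace ℝ (Fin d)))
    (S : Finset (EuclideanSpace ℝ (Fin d)))
    (hP : P = convexHull ℝ (S : Set (EuclideanSpace ℝ (Fin d))))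
    (hfull : (interior P).Nonempty)
    (x : EuclideanSpace ℝ (Fin d)) (hx : x ∈ P)
    (K : Set (EuclideanSpace ℝ (Fin d)))
    (hK : K = ⋃ s ∈ Set.Ioi (0 : ℝ), s • ((fun y => y - x) '' P)) :
    Tendsto
      (fun r : ℝ => (volume (ball x r ∩ P)).toReal / (volume (ball x r)).toReal)
      (nhdsWithin 0 (Set.Ioi 0))
      (nhds (∫ v in K, Real.exp (-Real.pi * ‖v‖ ^ 2))) := by
  classical
  set Q : Set (EuclideanSpace ℝ (Fin d)) := (fun y => y - x) '' P with hQdef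
  -- `Q` is a polytope containing `0`
  have hQvadd : Q = (-x) +ᵥ P := by
    ext v
    simp only [hQdef, Set.mem_image, Set.mem_vadd_set]
    constructor
    · rintro ⟨p, hp, rfl⟩; exact ⟨p, hp, by rw [vadd_eq_add, neg_add_eq_sub]⟩
    · rintro ⟨p, hp, rfl⟩; exact ⟨p, hp, by rw [vadd_eq_add, neg_add_eq_sub]⟩
  have hQhull : Q = convexHull ℝ ((S.image (fun y => y - x) : Finset _) :
      Set (EuclideanSpace ℝ (Fin d))) := by
    rw [hQvadd, hP, ← convexHull_vadd, Finset.coe_image]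
    congr 1
    ext v
    simp only [Set.mem_vadd_set, Set.mem_image]
    constructor
    · rintro ⟨p, hp, rfl⟩; exact ⟨p, hp, by rw [vadd_eq_add, neg_add_eq_sub]⟩
    · rintro ⟨p, hp, rfl⟩; exact ⟨p, hp, by rw [vadd_eq_add, neg_add_eq_sub]⟩
  have hQ0 : (0 : EuclideanSpace ℝ (Fin d)) ∈ Q := ⟨x, hx, sub_self x⟩
  have hQconv : Convex ℝ Q := hQhull ▸ convex_convexHull ℝ _
  have hQcomp : IsCompact Q := hQhull ▸
    ((S.image (fun y => y - x)).finite_toSet).isCompact_convexHull ℝ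
  -- basic properties of the cone `K`
  have hKmeas : MeasurableSet K := hK ▸ measurableSet_cone hQconv hQ0 hQcomp
  have hcone : ∀ r : ℝ, 0 < r → r • K = K := fun r hr => by rw [hK]; exact cone_smul hr
  have hQK : Q ⊆ K := by
    intro q hq
    rw [hK]
    exact mem_cone_iff.2 ⟨1, one_pos, by simpa using hq⟩
  obtain ⟨ε, hε, hloc⟩ := exists_eps (S.image (fun y => y - x)) Q hQhull hQ0
  -- the ratio is eventually constant
  rw [setIntegral_gauss_cone K hKmeas hcone]
  have hconst : ∀ r : ℝ, r ∈ Set.Ioo 0 ε →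
      (volume (ball x r ∩ P)).toReal / (volume (ball x r)).toReal =
        (volume (ball (0 : EuclideanSpace ℝ (Fin d)) 1 ∩ K)).toReal /
          (volume (ball (0 : EuclideanSpace ℝ (Fin d)) 1)).toReal := by
    intro r hr
    obtain ⟨hr0, hrε⟩ := hr
    -- translate
    have htrans : ball x r ∩ P = x +ᵥ (ball (0 : EuclideanSpace ℝ (Fin d)) r ∩ Q) := by
      ext y
      simp only [Set.mem_inter_iff, Set.mem_vadd_set, mem_ball]
      constructor
      · intro ⟨hy1, hy2⟩
        refine ⟨y - x, ⟨?_, ⟨y, hy2, rfl⟩⟩, by simp⟩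
        rw [dist_zero_right, ← dist_eq_norm]
        exact hy1
      · rintro ⟨v, ⟨hv1, p, hp, rfl⟩, rfl⟩
        rw [dist_zero_right] at hv1
        constructor
        · rw [vadd_eq_add, dist_eq_norm]
          simpa using hv1
        · rw [vadd_eq_add]
          simpa using hp
    have hQKr : ball (0 : EuclideanSpace ℝ (Fin d)) r ∩ Q =
        ball (0 : EuclideanSpace ℝ (Fin d)) r ∩ K := by
      apply Set.Subset.antisymm
      · exact Set.inter_subset_inter_right _ hQK
      · rintro v ⟨hv1, hv2⟩
        have : ‖v‖ < ε := lt_of_lt_of_le (by rwa [mem_ball_zero_iff] at hv1) hrε.le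
        exact ⟨hv1, hloc v (hK ▸ hv2) this⟩
    have hballs : ball x r = x +ᵥ ball (0 : EuclideanSpace ℝ (Fin d)) r := by
      rw [Metric.vadd_ball, vadd_eq_add, add_zero]
    rw [htrans, hballs, measure_vadd, measure_vadd, hQKr,
      volume_ball_inter_cone hcone hr0,
      show (ball (0 : EuclideanSpace ℝ (Fin d)) r) =
        ball (0 : EuclideanSpace ℝ (Fin d)) r ∩ Set.univ by rw [Set.inter_univ],
      volume_ball_inter_cone (fun s hs => Set.smul_set_univ₀ hs.ne') hr0, Set.inter_univ,
      ENNReal.toReal_mul, ENNReal.toReal_mul, ENNReal.toReal_ofReal (by positivity),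
      mul_div_mul_left _ _ (by positivity : (0:ℝ) < r ^ d).ne']
  refine Tendsto.congr' ?_ tendsto_const_nhds
  filter_upwards [Ioo_mem_nhdsGT_of_mem (Set.mem_Ico.2 ⟨le_refl (0:ℝ), hε⟩)] with r hr
  exact (hconst r hr).symm
end
end

section
/- Let P ⊆ ℝ^d be a full-dimensional polytope. Then for every point x ∈ P, the Gaussian smoothing (1_P ∗ G_ε)(x) converges, as ε → 0+, to the Gaussian measure ∫_K e^{−π‖v‖²} dv of the cone K = ⋃_{s>0} s·(P − x) subtended by P at x; for x ∉ P it converges to 0. Consequently lim_{ε→0+} (1_P ∗ G_ε)(x) = ω_P(x) for every x ∈ ℝ^d. -/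
open MeasureTheory Metric Filter Pointwise Topology
open scoped ENNReal

noncomputable section

/-- The heat kernel `G_ε(x) = ε^{−d/2} e^{−π‖x‖²/ε}`. -/
def heatKer (d : ℕ) (ε : ℝ) (x : EuclideanSpace ℝ (Fin d)) : ℝ :=
  ε ^ (-(d : ℝ) / 2) * Real.exp (-Real.pi * ‖x‖ ^ 2 / ε)

namespace SAux
variable {d : ℕ}

abbrev E (d : ℕ) := EuclideanSpace ℝ (Fin d)

def gauss (d : ℕ) (v : E d) : ℝ := Real.exp (-Real.pi * ‖v‖ ^ 2)

lemma gauss_nonneg (v : E d) : 0 ≤ gauss d v := (Real.exp_pos _).le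

lemma gauss_le_one (v : E d) : gauss d v ≤ 1 := by
  rw [gauss, Real.exp_le_one_iff]
  have : (0:ℝ) ≤ Real.pi * ‖v‖ ^ 2 := by positivity
  linarith

lemma continuous_gauss : Continuous (gauss d) := by
  unfold gauss; fun_prop

lemma integrable_gauss : Integrable (gauss d) := by
  have h := GaussianFourier.integrable_cexp_neg_mul_sq_norm_add
    (V := E d) (b := (Real.pi : ℂ)) (by simpa using Real.pi_pos) 0 0
  have h2 := h.re
  apply h2.congr
  filter_upwards with v
  simp only [zero_mul, add_zero, gauss, RCLike.re_to_complex]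
  rw [show (-(Real.pi:ℂ) * (‖v‖:ℂ) ^ 2) = ((-Real.pi * ‖v‖^2 : ℝ) : ℂ) by push_cast; ring,
    ← Complex.ofReal_exp, Complex.ofReal_re]

lemma integral_gauss : ∫ v : E d, gauss d v = 1 := by
  have h := GaussianFourier.integral_rexp_neg_mul_sq_norm (V := E d) Real.pi_pos
  simp only [gauss]
  rw [h, div_self Real.pi_ne_zero, Real.one_rpow]


lemma smul_mono_cone {Q : Set (E d)} (hQ : Convex ℝ Q) (h0 : (0:E d) ∈ Q)
    {s t : ℝ} (hs : 0 < s) (hst : s ≤ t) : s • Q ⊆ t • Q := by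
  have ht : 0 < t := hs.trans_le hst
  rintro y ⟨q, hq, rfl⟩
  refine ⟨(s / t) • q, ?_, ?_⟩
  · have := hQ h0 hq (a := 1 - s / t) (b := s / t) (by
      have : s / t ≤ 1 := div_le_one_of_le₀ hst ht.le
      linarith) (by positivity) (by ring)
    simpa using this
  · show t • ((s / t) • q) = s • q
    rw [smul_smul, mul_div_cancel₀ _ ht.ne']

lemma cone_eq_iUnion_nat {Q : Set (E d)} (hQ : Convex ℝ Q) (h0 : (0:E d) ∈ Q) :
    (⋃ s ∈ Set.Ioi (0:ℝ), s • Q) = ⋃ n : ℕ, ((n:ℝ)+1) • Q := by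
  apply Set.Subset.antisymm
  · rintro v hv
    simp only [Set.mem_iUnion, Set.mem_Ioi] at hv ⊢
    obtain ⟨s, hs, hvs⟩ := hv
    refine ⟨⌈s⌉₊, smul_mono_cone hQ h0 hs ?_ hvs⟩
    calc s ≤ ⌈s⌉₊ := Nat.le_ceil s
    _ ≤ (⌈s⌉₊ : ℝ) + 1 := by linarith
  · rintro v hv
    simp only [Set.mem_iUnion, Set.mem_Ioi] at hv ⊢
    obtain ⟨n, hn⟩ := hv
    exact ⟨(n:ℝ)+1, Set.mem_Ioi.2 (by positivity : (0:ℝ) < (n:ℝ)+1), hn⟩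

lemma smul_cone {Q : Set (E d)} {r : ℝ} (hr : 0 < r) :
    r • (⋃ s ∈ Set.Ioi (0:ℝ), s • Q) = ⋃ s ∈ Set.Ioi (0:ℝ), s • Q := by
  ext v
  constructor
  · intro hv
    obtain ⟨w, hw, rfl⟩ := Set.mem_smul_set.1 hv
    simp only [Set.mem_iUnion, Set.mem_Ioi] at hw ⊢
    obtain ⟨s, hs, q, hq, rfl⟩ := hw
    exact ⟨r * s, by positivity, q, hq, (smul_smul r s q).symm⟩
  · intro hv
    simp only [Set.mem_iUnion, Set.mem_Ioi] at hv
    obtain ⟨s, hs, q, hq, rfl⟩ := hv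
    refine Set.mem_smul_set.2 ⟨(s/r) • q, ?_, ?_⟩
    · exact Set.mem_iUnion₂.2 ⟨s/r, Set.mem_Ioi.2 (by positivity), ⟨q, hq, rfl⟩⟩
    · rw [smul_smul]
      congr 1
      field_simp

lemma tendsto_toReal_measure_atTop {α : Type*} [MeasurableSpace α] (ν : Measure α)
    (A : ℝ → Set α) (hmono : ∀ ⦃s t : ℝ⦄, 0 < s → s ≤ t → A s ⊆ A t)
    (hfin : ν (⋃ n : ℕ, A ((n:ℝ)+1)) ≠ ⊤) :
    Tendsto (fun t => (ν (A t)).toReal) atTop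
      (𝓝 ((ν (⋃ n : ℕ, A ((n:ℝ)+1))).toReal)) := by
  set L := ν (⋃ n : ℕ, A ((n:ℝ)+1)) with hL
  have hmonoN : Monotone (fun n : ℕ => A ((n:ℝ)+1)) := by
    intro m n hmn
    have : (m:ℝ) ≤ n := Nat.cast_le.2 hmn
    exact hmono (by positivity) (by linarith)
  have h1 : Tendsto (fun n : ℕ => ν (A ((n:ℝ)+1))) atTop (𝓝 L) :=
    tendsto_measure_iUnion_atTop hmonoN
  have h2 : Tendsto (fun n : ℕ => (ν (A ((n:ℝ)+1))).toReal) atTop (𝓝 L.toReal) :=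
    (ENNReal.tendsto_toReal hfin).comp h1
  have hsub : ∀ t : ℝ, 0 < t → A t ⊆ ⋃ n : ℕ, A ((n:ℝ)+1) := by
    intro t ht
    refine Set.subset_iUnion_of_subset ⌈t⌉₊ (hmono ht ?_)
    calc t ≤ ⌈t⌉₊ := Nat.le_ceil t
    _ ≤ (⌈t⌉₊:ℝ)+1 := by linarith
  rw [Metric.tendsto_atTop]
  intro δ hδ
  obtain ⟨N, hN⟩ := (Metric.tendsto_atTop.1 h2) δ hδ
  refine ⟨(N:ℝ)+1, fun t ht => ?_⟩
  have ht0 : (0:ℝ) < t := lt_of_lt_of_le (by positivity) ht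
  have hle1 : ν (A ((N:ℝ)+1)) ≤ ν (A t) := measure_mono (hmono (by positivity) ht)
  have hle2 : ν (A t) ≤ L := measure_mono (hsub t ht0)
  have hfin2 : ν (A t) ≠ ⊤ := (lt_of_le_of_lt hle2 (lt_top_iff_ne_top.2 hfin)).ne
  have hNfin : ν (A ((N:ℝ)+1)) ≠ ⊤ := (lt_of_le_of_lt (hle1.trans hle2) (lt_top_iff_ne_top.2 hfin)).ne
  have e1 : (ν (A ((N:ℝ)+1))).toReal ≤ (ν (A t)).toReal :=
    ENNReal.toReal_mono hfin2 hle1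
  have e2 : (ν (A t)).toReal ≤ L.toReal := ENNReal.toReal_mono hfin hle2
  have := hN N le_rfl
  rw [Real.dist_eq] at this ⊢
  rw [abs_sub_lt_iff] at this ⊢
  constructor <;> [skip; skip] <;> nlinarith [this.1, this.2]

lemma tendsto_inv_sqrt_atTop :
    Tendsto (fun ε : ℝ => (Real.sqrt ε)⁻¹) (nhdsWithin 0 (Set.Ioi 0)) atTop := by
  apply tendsto_inv_nhdsGT_zero.comp
  have h1 : Tendsto Real.sqrt (nhdsWithin 0 (Set.Ioi 0)) (𝓝 0) := by
    have := (Real.continuous_sqrt.tendsto 0)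
    simpa using this.mono_left nhdsWithin_le_nhds
  apply tendsto_nhdsWithin_iff.2 ⟨h1, ?_⟩
  filter_upwards [self_mem_nhdsWithin] with x hx
  exact Set.mem_Ioi.2 (Real.sqrt_pos.2 hx)

def gaussConst (d : ℕ) : ℝ≥0∞ :=
  ∫⁻ t in Set.Ioo (0:ℝ) 1, ENNReal.ofReal (Real.sqrt (Real.log t⁻¹ / Real.pi) ^ d)

lemma lintegral_gauss_cone {K : Set (E d)} (hK : MeasurableSet K)
    (hcone : ∀ r : ℝ, 0 < r → r • K = K) :
    ∫⁻ v in K, ENNReal.ofReal (gauss d v)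
      = gaussConst d * volume (K ∩ ball (0:E d) 1) := by
  have h := lintegral_eq_lintegral_meas_lt (volume.restrict K)
    (Filter.Eventually.of_forall (gauss_nonneg (d := d)))
    (continuous_gauss.measurable.aemeasurable)
  rw [h]
  have hcongr : ∫⁻ t in Set.Ioi (0:ℝ), (volume.restrict K) {a | t < gauss d a}
      = ∫⁻ t in Set.Ioi (0:ℝ),
          (Set.Ioo (0:ℝ) 1).indicator
            (fun t => ENNReal.ofReal (Real.sqrt (Real.log t⁻¹ / Real.pi) ^ d)
              * volume (K ∩ ball (0:E d) 1)) t := by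
    apply setLIntegral_congr_fun measurableSet_Ioi
    intro t ht
    dsimp only
    rcases lt_or_ge t 1 with h1 | h1
    · have ht0 : (0:ℝ) < t := ht
      have hlog : 0 < Real.log t⁻¹ := Real.log_pos ((one_lt_inv_iff₀).2 ⟨ht0, h1⟩)
      set R := Real.sqrt (Real.log t⁻¹ / Real.pi) with hRdef
      have hR : 0 < R := Real.sqrt_pos.2 (by positivity)
      have hset : {v : E d | t < gauss d v} = ball (0:E d) R := by
        ext v
        simp only [Set.mem_setOf_eq, mem_ball, dist_zero_right, gauss]
        rw [← Real.log_lt_iff_lt_exp ht0, hRdef]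
        rw [show Real.log t = -Real.log t⁻¹ by rw [Real.log_inv]; ring]
        rw [Real.lt_sqrt (norm_nonneg v)]
        constructor
        · intro hlt
          rw [lt_div_iff₀ Real.pi_pos, mul_comm]
          nlinarith
        · intro hlt
          rw [lt_div_iff₀ Real.pi_pos, mul_comm] at hlt
          nlinarith
      rw [Measure.restrict_apply (by rw [hset]; exact measurableSet_ball), hset,
        Set.indicator_of_mem (Set.mem_Ioo.2 ⟨ht0, h1⟩)]
      have hball : ball (0:E d) R ∩ K = R • (ball (0:E d) 1 ∩ K) := by
        rw [Set.smul_set_inter₀ hR.ne', smul_unitBall_of_pos hR, hcone R hR]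
      rw [hball, Measure.addHaar_smul_of_nonneg volume hR.le, finrank_euclideanSpace_fin,
        Set.inter_comm]
    · have hset : {v : E d | t < gauss d v} = (∅ : Set (E d)) := by
        ext v
        simp only [Set.mem_setOf_eq, Set.mem_empty_iff_false, iff_false, not_lt]
        exact (gauss_le_one v).trans h1
      rw [Measure.restrict_apply (by rw [hset]; exact MeasurableSet.empty), hset,
        Set.empty_inter, measure_empty, Set.indicator_of_notMem (by
          simp only [Set.mem_Ioo, not_and, not_lt]
          intro _; exact h1)]
  rw [hcongr, lintegral_indicator measurableSet_Ioo, Measure.restrict_restrict measurableSet_Ioo,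
    show Set.Ioo (0:ℝ) 1 ∩ Set.Ioi 0 = Set.Ioo 0 1 by
      rw [Set.inter_eq_left]; exact fun x hx => hx.1]
  rw [lintegral_mul_const]
  · rfl
  · apply ENNReal.measurable_ofReal.comp
    exact ((Real.measurable_log.comp measurable_inv).div_const _).sqrt.pow_const d

lemma gaussConst_mul_ball :
    gaussConst d * volume (ball (0:E d) 1) = 1 := by
  have h := lintegral_gauss_cone (d := d) (K := Set.univ) MeasurableSet.univ
    (fun r hr => Set.smul_set_univ₀ hr.ne')
  rw [Measure.restrict_univ, Set.univ_inter] at h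
  rw [← h, ← ofReal_integral_eq_lintegral_ofReal integrable_gauss
    (Filter.Eventually.of_forall (gauss_nonneg (d := d))), integral_gauss, ENNReal.ofReal_one]

lemma volume_ball_ne_zero : volume (ball (0:E d) 1) ≠ 0 :=
  (measure_ball_pos volume (0:E d) one_pos).ne'

lemma volume_ball_ne_top : volume (ball (0:E d) 1) ≠ ⊤ :=
  measure_ball_lt_top.ne

lemma gaussConst_eq : gaussConst d = (volume (ball (0:E d) 1))⁻¹ := by
  have h := gaussConst_mul_ball (d := d)
  calc gaussConst d = gaussConst d * (volume (ball (0:E d) 1) * (volume (ball (0:E d) 1))⁻¹) := by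
        rw [ENNReal.mul_inv_cancel volume_ball_ne_zero volume_ball_ne_top, mul_one]
  _ = gaussConst d * volume (ball (0:E d) 1) * (volume (ball (0:E d) 1))⁻¹ := by ring
  _ = (volume (ball (0:E d) 1))⁻¹ := by rw [h, one_mul]

lemma setIntegral_gauss_cone {K : Set (E d)} (hK : MeasurableSet K)
    (hcone : ∀ r : ℝ, 0 < r → r • K = K) :
    ∫ v in K, gauss d v
      = (volume (K ∩ ball (0:E d) 1)).toReal / (volume (ball (0:E d) 1)).toReal := by
  rw [integral_eq_lintegral_of_nonneg_ae
    (Filter.Eventually.of_forall (gauss_nonneg (d := d)))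
    continuous_gauss.aestronglyMeasurable.restrict]
  rw [lintegral_gauss_cone hK hcone, gaussConst_eq, ENNReal.toReal_mul, ENNReal.toReal_inv,
    inv_mul_eq_div]

lemma smoothing_eq {P : Set (E d)} (x : E d) {ε : ℝ} (hε : 0 < ε) :
    ∫ y in P, heatKer d ε (x - y)
      = ∫ v in (Real.sqrt ε)⁻¹ • ((fun y => y - x) '' P), gauss d v := by
  have hs : 0 < Real.sqrt ε := Real.sqrt_pos.2 hε
  have hpt : ∀ y : E d, heatKer d ε (x - y)
      = ε ^ (-(d:ℝ)/2) * gauss d ((Real.sqrt ε)⁻¹ • (y - x)) := by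
    intro y
    rw [heatKer, gauss]
    congr 1
    rw [norm_smul, norm_sub_rev, Real.norm_eq_abs, abs_of_pos (inv_pos.2 hs), mul_pow,
      inv_pow, Real.sq_sqrt hε.le]
    field_simp
  simp only [hpt]
  rw [integral_const_mul]
  have himg : (fun y : E d => y - x) '' P = (fun z : E d => z + x) ⁻¹' P := by
    ext z
    constructor
    · rintro ⟨y, hy, rfl⟩
      simpa [sub_add_cancel] using hy
    · intro hz
      exact ⟨z + x, hz, add_sub_cancel_right z x⟩
  have htrans : ∫ y in P, gauss d ((Real.sqrt ε)⁻¹ • (y - x))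
      = ∫ z in (fun y : E d => y - x) '' P, gauss d ((Real.sqrt ε)⁻¹ • z) := by
    rw [himg]
    have := (measurePreserving_add_right (volume : Measure (E d)) x).setIntegral_preimage_emb
      (measurableEmbedding_addRight x) (fun y => gauss d ((Real.sqrt ε)⁻¹ • (y - x))) P
    rw [← this]
    simp only [add_sub_cancel_right]
  rw [htrans, Measure.setIntegral_comp_smul_of_pos volume (gauss d) _ (inv_pos.2 hs),
    finrank_euclideanSpace_fin, smul_eq_mul, ← mul_assoc]
  have hpow : (Real.sqrt ε) ^ d = ε ^ ((d:ℝ)/2) := by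
    rw [Real.sqrt_eq_rpow, ← Real.rpow_natCast (ε ^ ((1:ℝ)/2)) d, ← Real.rpow_mul hε.le]
    congr 1
    ring
  rw [inv_pow, inv_inv, hpow, ← Real.rpow_add hε, neg_div, neg_add_cancel, Real.rpow_zero,
    one_mul]

def gmeasure (d : ℕ) : Measure (E d) :=
  volume.withDensity fun v => ENNReal.ofReal (gauss d v)

lemma gmeasure_apply {A : Set (E d)} (hA : MeasurableSet A) :
    gmeasure d A = ∫⁻ v in A, ENNReal.ofReal (gauss d v) := withDensity_apply _ hA

lemma gmeasure_univ : gmeasure d Set.univ = 1 := by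
  rw [gmeasure_apply MeasurableSet.univ, Measure.restrict_univ,
    ← ofReal_integral_eq_lintegral_ofReal integrable_gauss
      (Filter.Eventually.of_forall (gauss_nonneg (d := d))), integral_gauss, ENNReal.ofReal_one]

lemma gmeasure_ne_top (A : Set (E d)) : gmeasure d A ≠ ⊤ := by
  refine (lt_of_le_of_lt (measure_mono (Set.subset_univ A)) ?_).ne
  rw [gmeasure_univ]
  exact ENNReal.one_lt_top

lemma setIntegral_gauss_eq {A : Set (E d)} (hA : MeasurableSet A) :
    ∫ v in A, gauss d v = (gmeasure d A).toReal := by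
  rw [gmeasure_apply hA, integral_eq_lintegral_of_nonneg_ae
    (Filter.Eventually.of_forall (gauss_nonneg (d := d)))
    continuous_gauss.aestronglyMeasurable.restrict]

lemma tendsto_smoothing_mem {P : Set (E d)} (hconv : Convex ℝ P) (hcomp : IsCompact P)
    {x : E d} (hx : x ∈ P) :
    Tendsto (fun ε : ℝ => ∫ y in P, heatKer d ε (x - y)) (nhdsWithin 0 (Set.Ioi 0))
      (𝓝 (∫ v in ⋃ s ∈ Set.Ioi (0:ℝ), s • ((fun y => y - x) '' P), gauss d v)) := by
  set Q := (fun y : E d => y - x) '' P with hQdef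
  have hQconv : Convex ℝ Q := by
    have : Q = (fun z : E d => -x + z) '' P := by
      ext z; simp [hQdef, sub_eq_neg_add, add_comm]
    rw [this]
    exact hconv.translate (-x)
  have hQcomp : IsCompact Q := hcomp.image (continuous_id.sub continuous_const)
  have h0Q : (0:E d) ∈ Q := ⟨x, hx, sub_self x⟩
  set K := ⋃ s ∈ Set.Ioi (0:ℝ), s • Q with hKdef
  have hKeq : K = ⋃ n : ℕ, ((n:ℝ)+1) • Q := cone_eq_iUnion_nat hQconv h0Q
  have hsmulmeas : ∀ t : ℝ, MeasurableSet (t • Q) := fun t =>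
    (hQcomp.smul t).isClosed.measurableSet
  have hKmeas : MeasurableSet K := by
    rw [hKeq]; exact MeasurableSet.iUnion fun n => hsmulmeas _
  have hmono : ∀ ⦃s t : ℝ⦄, 0 < s → s ≤ t → s • Q ⊆ t • Q := fun s t hs hst =>
    smul_mono_cone hQconv h0Q hs hst
  have h1 := tendsto_toReal_measure_atTop (gmeasure d) (fun t => t • Q) hmono
    (gmeasure_ne_top _)
  have h2 := h1.comp tendsto_inv_sqrt_atTop
  rw [show (⋃ n : ℕ, ((n:ℝ)+1) • Q) = K from hKeq.symm] at h2
  rw [show (∫ v in ⋃ s ∈ Set.Ioi (0:ℝ), s • Q, gauss d v) = (gmeasure d K).toReal from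
    setIntegral_gauss_eq hKmeas]
  refine Tendsto.congr' ?_ h2
  filter_upwards [self_mem_nhdsWithin] with ε hε
  have hε' : (0:ℝ) < ε := hε
  show (gmeasure d ((Real.sqrt ε)⁻¹ • Q)).toReal = _
  rw [← setIntegral_gauss_eq (hsmulmeas _), ← smoothing_eq x hε']

lemma tendsto_smoothing_not_mem {P : Set (E d)} (hclosed : IsClosed P)
    (hfinvol : volume P ≠ ⊤) {x : E d} (hx : x ∉ P) :
    Tendsto (fun ε : ℝ => ∫ y in P, heatKer d ε (x - y)) (nhdsWithin 0 (Set.Ioi 0))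
      (𝓝 0) := by
  obtain ⟨δ, hδ, hballs⟩ := Metric.isOpen_iff.1 hclosed.isOpen_compl x hx
  have hdist : ∀ y ∈ P, δ ≤ ‖x - y‖ := by
    intro y hy
    by_contra hlt
    push_neg at hlt
    have : y ∈ ball x δ := by
      rw [mem_ball, dist_comm, dist_eq_norm]
      exact hlt
    exact hballs this hy
  have hbound : ∀ᶠ ε in nhdsWithin (0:ℝ) (Set.Ioi 0),
      ‖∫ y in P, heatKer d ε (x - y)‖
        ≤ ε ^ (-(d:ℝ)/2) * Real.exp (-Real.pi * δ^2 / ε) * (volume P).toReal := by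
    filter_upwards [self_mem_nhdsWithin] with ε hε
    have hε' : (0:ℝ) < ε := hε
    have hcont : Continuous fun y : E d => heatKer d ε (x - y) := by
      unfold heatKer; fun_prop
    refine norm_setIntegral_le_of_norm_le_const (lt_top_iff_ne_top.2 hfinvol) ?_
    intro y hy
    have h1 : 0 < ε ^ (-(d:ℝ)/2) := Real.rpow_pos_of_pos hε' _
    rw [heatKer, Real.norm_eq_abs, abs_of_nonneg (by positivity)]
    refine mul_le_mul_of_nonneg_left ?_ h1.le
    apply Real.exp_le_exp.2
    apply (div_le_div_iff_of_pos_right hε').2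
    have h3 := hdist y hy
    have hsq : δ^2 ≤ ‖x - y‖^2 := by nlinarith
    nlinarith [Real.pi_pos]
  have hgz : Tendsto (fun ε : ℝ => ε ^ (-(d:ℝ)/2) * Real.exp (-Real.pi * δ^2 / ε)
      * (volume P).toReal) (nhdsWithin (0:ℝ) (Set.Ioi 0)) (𝓝 0) := by
    have h0 := (tendsto_rpow_mul_exp_neg_mul_atTop_nhds_zero ((d:ℝ)/2)
      (Real.pi * δ^2) (by positivity)).comp tendsto_inv_nhdsGT_zero
    have h0' : Tendsto (fun ε : ℝ => ε ^ (-(d:ℝ)/2) * Real.exp (-Real.pi * δ^2 / ε))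
        (nhdsWithin (0:ℝ) (Set.Ioi 0)) (𝓝 0) := by
      refine Tendsto.congr' ?_ h0
      filter_upwards [self_mem_nhdsWithin] with ε hε
      have hε' : (0:ℝ) < ε := hε
      show (ε⁻¹) ^ ((d:ℝ)/2) * Real.exp (-(Real.pi * δ^2) * ε⁻¹) = _
      rw [Real.inv_rpow hε'.le, ← Real.rpow_neg hε'.le]
      congr 2
      · ring
      · field_simp
    have hfin := h0'.mul_const (volume P).toReal
    rw [zero_mul] at hfin
    exact hfin
  exact squeeze_zero_norm' hbound hgz

lemma image_sub_eq_preimage (P : Set (E d)) (x : E d) :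
    (fun y : E d => y - x) '' P = (fun z : E d => z + x) ⁻¹' P := by
  ext z
  constructor
  · rintro ⟨y, hy, rfl⟩
    simpa [sub_add_cancel] using hy
  · intro hz
    exact ⟨z + x, hz, add_sub_cancel_right z x⟩

lemma tendsto_ratio_mem {P : Set (E d)} (hconv : Convex ℝ P) (hcomp : IsCompact P)
    {x : E d} (hx : x ∈ P) :
    Tendsto (fun r : ℝ => (volume (ball x r ∩ P)).toReal / (volume (ball x r)).toReal)
      (nhdsWithin 0 (Set.Ioi 0))
      (𝓝 ((volume (ball (0:E d) 1 ∩ ⋃ s ∈ Set.Ioi (0:ℝ), s • ((fun y => y - x) '' P))).toReal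
        / (volume (ball (0:E d) 1)).toReal)) := by
  set Q := (fun y : E d => y - x) '' P with hQdef
  have hQconv : Convex ℝ Q := by
    have : Q = (fun z : E d => -x + z) '' P := by
      ext z; simp [hQdef, sub_eq_neg_add, add_comm]
    rw [this]
    exact hconv.translate (-x)
  have h0Q : (0:E d) ∈ Q := ⟨x, hx, sub_self x⟩
  set K := ⋃ s ∈ Set.Ioi (0:ℝ), s • Q with hKdef
  have hKeq : K = ⋃ n : ℕ, ((n:ℝ)+1) • Q := cone_eq_iUnion_nat hQconv h0Q
  have hmono' : ∀ ⦃s t : ℝ⦄, 0 < s → s ≤ t →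
      (ball (0:E d) 1 ∩ s • Q) ⊆ (ball (0:E d) 1 ∩ t • Q) := fun s t hs hst =>
    Set.inter_subset_inter Set.Subset.rfl (smul_mono_cone hQconv h0Q hs hst)
  have hU : (⋃ n : ℕ, (ball (0:E d) 1 ∩ ((n:ℝ)+1) • Q)) = ball (0:E d) 1 ∩ K := by
    rw [← Set.inter_iUnion, hKeq]
  have hfin' : volume (⋃ n : ℕ, (ball (0:E d) 1 ∩ ((n:ℝ)+1) • Q)) ≠ ⊤ := by
    refine (lt_of_le_of_lt (measure_mono ?_) (measure_ball_lt_top (x := (0:E d)) (r := (1:ℝ)))).ne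
    rw [hU]; exact Set.inter_subset_left
  have h1 := tendsto_toReal_measure_atTop volume
    (fun t => ball (0:E d) 1 ∩ t • Q) hmono' hfin'
  rw [hU] at h1
  have h2 := h1.comp tendsto_inv_nhdsGT_zero
  have h3 := h2.div_const (volume (ball (0:E d) 1)).toReal
  refine Tendsto.congr' ?_ h3
  filter_upwards [self_mem_nhdsWithin] with r hr
  have hr' : (0:ℝ) < r := hr
  show (volume (ball (0:E d) 1 ∩ r⁻¹ • Q)).toReal / (volume (ball (0:E d) 1)).toReal = _
  have htrans : volume (ball x r ∩ P) = volume (ball (0:E d) r ∩ Q) := by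
    have hpre : ball (0:E d) r ∩ Q = (fun z : E d => z + x) ⁻¹' (ball x r ∩ P) := by
      rw [hQdef, image_sub_eq_preimage, Set.preimage_inter]
      congr 1
      ext z
      simp [mem_ball, dist_eq_norm, add_sub_cancel_right]
    rw [hpre, measure_preimage_add_right]
  have hscale : ball (0:E d) r ∩ Q = r • (ball (0:E d) 1 ∩ r⁻¹ • Q) := by
    rw [Set.smul_set_inter₀ hr'.ne', smul_unitBall_of_pos hr', smul_smul,
      mul_inv_cancel₀ hr'.ne', one_smul]
  rw [htrans, hscale, Measure.addHaar_smul_of_nonneg volume hr'.le,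
    Measure.addHaar_ball_of_pos volume x hr', finrank_euclideanSpace_fin,
    ENNReal.toReal_mul, ENNReal.toReal_mul, ENNReal.toReal_ofReal (by positivity),
    mul_div_mul_left _ _ (by positivity : (r:ℝ)^d ≠ 0)]

lemma tendsto_ratio_not_mem {P : Set (E d)} (hclosed : IsClosed P)
    {x : E d} (hx : x ∉ P) :
    Tendsto (fun r : ℝ => (volume (ball x r ∩ P)).toReal / (volume (ball x r)).toReal)
      (nhdsWithin 0 (Set.Ioi 0)) (𝓝 0) := by
  obtain ⟨δ, hδ, hballs⟩ := Metric.isOpen_iff.1 hclosed.isOpen_compl x hx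
  refine Tendsto.congr' ?_ (tendsto_const_nhds : Tendsto (fun _ : ℝ => (0:ℝ)) (nhdsWithin 0 (Set.Ioi 0)) (𝓝 0))
  filter_upwards [Ioo_mem_nhdsGT_of_mem (Set.mem_Ico.2 ⟨le_rfl, hδ⟩)] with r hr
  have hempty : ball x r ∩ P = ∅ := by
    rw [Set.eq_empty_iff_forall_notMem]
    rintro y ⟨hy1, hy2⟩
    exact hballs (ball_subset_ball hr.2.le hy1) hy2
  rw [hempty, measure_empty]
  simp

lemma omega_eq {P : Set (E d)} (hconv : Convex ℝ P) (hcomp : IsCompact P)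
    {x : E d} (hx : x ∈ P) :
    ∫ v in (⋃ s ∈ Set.Ioi (0:ℝ), s • ((fun y => y - x) '' P)), gauss d v
      = (volume (ball (0:E d) 1 ∩ ⋃ s ∈ Set.Ioi (0:ℝ), s • ((fun y => y - x) '' P))).toReal
        / (volume (ball (0:E d) 1)).toReal := by
  set Q := (fun y : E d => y - x) '' P with hQdef
  have hQconv : Convex ℝ Q := by
    have : Q = (fun z : E d => -x + z) '' P := by
      ext z; simp [hQdef, sub_eq_neg_add, add_comm]
    rw [this]
    exact hconv.translate (-x)
  have hQcomp : IsCompact Q := hcomp.image (continuous_id.sub continuous_const)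
  have h0Q : (0:E d) ∈ Q := ⟨x, hx, sub_self x⟩
  set K := ⋃ s ∈ Set.Ioi (0:ℝ), s • Q with hKdef
  have hKeq : K = ⋃ n : ℕ, ((n:ℝ)+1) • Q := cone_eq_iUnion_nat hQconv h0Q
  have hKmeas : MeasurableSet K := by
    rw [hKeq]
    exact MeasurableSet.iUnion fun n => (hQcomp.smul _).isClosed.measurableSet
  rw [setIntegral_gauss_cone hKmeas (fun r hr => smul_cone hr), Set.inter_comm]

end SAux

/-- For a full-dimensional polytope `P ⊆ ℝ^d`, the Gaussian smoothing
`(1_P ∗ G_ε)(x)` converges as `ε → 0+` to the Gaussian measure of the subtended cone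
when `x ∈ P`, to `0` when `x ∉ P`, and consequently to the solid angle `ω_P(x)`
(given as the limit of ball ratios) for every `x`. -/
theorem gaussian_smoothing_tendsto_solid_angle
    (d : ℕ) (P : Set (EuclideanSpace ℝ (Fin d)))
    (S : Finset (EuclideanSpace ℝ (Fin d)))
    (hP : P = convexHull ℝ (S : Set (EuclideanSpace ℝ (Fin d))))
    (hfull : (interior P).Nonempty)
    (ω : EuclideanSpace ℝ (Fin d) → ℝ)
    (hω : ∀ x : EuclideanSpace ℝ (Fin d),
      Tendsto
        (fun r : ℝ => (volume (ball x r ∩ P)).toReal / (volume (ball x r)).toReal)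
        (nhdsWithin 0 (Set.Ioi 0)) (nhds (ω x))) :
    (∀ x ∈ P,
      Tendsto (fun ε : ℝ => ∫ y in P, heatKer d ε (x - y))
        (nhdsWithin 0 (Set.Ioi 0))
        (nhds (∫ v in ⋃ s ∈ Set.Ioi (0 : ℝ), s • ((fun y => y - x) '' P),
                Real.exp (-Real.pi * ‖v‖ ^ 2)))) ∧
    (∀ x ∉ P,
      Tendsto (fun ε : ℝ => ∫ y in P, heatKer d ε (x - y))
        (nhdsWithin 0 (Set.Ioi 0)) (nhds 0)) ∧
    (∀ x : EuclideanSpace ℝ (Fin d),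
      Tendsto (fun ε : ℝ => ∫ y in P, heatKer d ε (x - y))
        (nhdsWithin 0 (Set.Ioi 0)) (nhds (ω x))) := by
  have hconv : Convex ℝ P := hP ▸ convex_convexHull ℝ _
  have hcomp : IsCompact P := hP ▸ S.finite_toSet.isCompact_convexHull ℝ
  have hclosed : IsClosed P := hcomp.isClosed
  have hfinvol : volume P ≠ ⊤ := hcomp.measure_lt_top.ne
  have main1 : ∀ x ∈ P,
      Tendsto (fun ε : ℝ => ∫ y in P, heatKer d ε (x - y))
        (nhdsWithin 0 (Set.Ioi 0))
        (nhds (∫ v in ⋃ s ∈ Set.Ioi (0 : ℝ), s • ((fun y => y - x) '' P),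
                Real.exp (-Real.pi * ‖v‖ ^ 2))) := by
    intro x hx
    have := SAux.tendsto_smoothing_mem hconv hcomp hx
    simpa [SAux.gauss] using this
  have main2 : ∀ x ∉ P,
      Tendsto (fun ε : ℝ => ∫ y in P, heatKer d ε (x - y))
        (nhdsWithin 0 (Set.Ioi 0)) (nhds 0) := fun x hx =>
    SAux.tendsto_smoothing_not_mem hclosed hfinvol hx
  refine ⟨main1, main2, ?_⟩
  intro x
  by_cases hx : x ∈ P
  · have h1 := SAux.tendsto_ratio_mem hconv hcomp hx
    have hωx := tendsto_nhds_unique (hω x) h1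
    have h2 := SAux.omega_eq hconv hcomp hx
    rw [hωx, ← h2]
    have := main1 x hx
    simpa [SAux.gauss] using this
  · have hωx := tendsto_nhds_unique (hω x) (SAux.tendsto_ratio_not_mem hclosed hx)
    rw [hωx]
    exact main2 x hx
end
end
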